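/- In the localized algebra U(g)[f^{−1}], the maps φ_a(u) := Σ_{i=0}^∞ C(a,i) (ad f)^i(u) f^{−i} for a ∈ ℂ (finite sums, since ad f is locally nilpotent) form a one-parameter group of algebra automorphisms: φ_a ∘ φ_b = φ_{a+b} for all a, b ∈ ℂ, and for a = s ∈ ℤ, φ_s(u) = f^s u f^{−s}. -/
import Mathlib

set_option linter.unusedSectionVars false

open Finset Polynomial

namespace Stmt5Aux

variable {B : Type*} [Ring B] [Algebra ℂ B]

/-- The inner derivation `ad f`. -/
def D (f : B) : B → B := fun x => f * x - x * f

lemma D_eq (f : B) : (fun x => f * x - x * f) = D f := rfl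

/-- generalized binomial coefficient -/
noncomputable def cc (a : ℂ) (i : ℕ) : ℂ :=
  (∏ j ∈ Finset.range i, (a - (j : ℂ))) / (Nat.factorial i : ℂ)

/-- the finite-sum version of `φ_a`. -/
noncomputable def SS (f g : B) (a : ℂ) (n : ℕ) (u : B) : B :=
  ∑ i ∈ Finset.range n, cc a i • ((D f)^[i] u * g ^ i)

variable {f g : B}

lemma D_zero : D f 0 = 0 := by simp [D]

lemma iter_D_zero_mono {n m : ℕ} {u : B} (h : (D f)^[n] u = 0) (hnm : n ≤ m) :
    (D f)^[m] u = 0 := by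
  obtain ⟨k, rfl⟩ := Nat.exists_eq_add_of_le hnm
  rw [add_comm, Function.iterate_add_apply, h, Function.iterate_fixed D_zero]

lemma D_add (u v : B) : D f (u + v) = D f u + D f v := by
  unfold D; rw [mul_add, add_mul]; abel

lemma iter_D_add (i : ℕ) (u v : B) : (D f)^[i] (u + v) = (D f)^[i] u + (D f)^[i] v := by
  induction i with
  | zero => simp
  | succ i ih => rw [Function.iterate_succ_apply', Function.iterate_succ_apply',
      Function.iterate_succ_apply', ih, D_add]

lemma cc_zero (a : ℂ) : cc a 0 = 1 := by simp [cc]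

lemma cc_zero_succ (i : ℕ) : cc 0 (i + 1) = 0 := by
  unfold cc
  rw [Finset.prod_eq_zero (Finset.mem_range.2 (Nat.succ_pos i)) (by simp)]
  simp

lemma cc_pascal (a : ℂ) (i : ℕ) : cc (a + 1) (i + 1) = cc a (i + 1) + cc a i := by
  unfold cc
  have h1 : ∏ j ∈ range (i + 1), (a + 1 - (j : ℂ)) =
      (∏ j ∈ range i, (a - (j : ℂ))) * (a + 1) := by
    rw [Finset.prod_range_succ']
    congr 1
    · exact Finset.prod_congr rfl fun j _ => by push_cast; ring
    · simp
  have h2 : ∏ j ∈ range (i + 1), (a - (j : ℂ)) =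
      (∏ j ∈ range i, (a - (j : ℂ))) * (a - (i : ℂ)) := Finset.prod_range_succ _ _
  rw [h1, h2, Nat.factorial_succ]
  have hfi : (Nat.factorial i : ℂ) ≠ 0 := Nat.cast_ne_zero.2 (Nat.factorial_ne_zero i)
  have hfi1 : ((i : ℂ) + 1) ≠ 0 := Nat.cast_add_one_ne_zero i
  push_cast
  field_simp
  ring

lemma SS_extend {n m : ℕ} {u : B} (h : (D f)^[n] u = 0) (hnm : n ≤ m) (a : ℂ) :
    SS f g a m u = SS f g a n u := by
  unfold SS
  refine (Finset.sum_subset (Finset.range_subset_range.2 hnm) ?_).symm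
  intro i _ hni
  have hi : n ≤ i := le_of_not_gt (by simpa using hni)
  rw [iter_D_zero_mono h hi, zero_mul, smul_zero]

lemma SS_add (a : ℂ) (n : ℕ) (u v : B) :
    SS f g a n (u + v) = SS f g a n u + SS f g a n v := by
  unfold SS
  rw [← Finset.sum_add_distrib]
  exact Finset.sum_congr rfl fun i _ => by rw [iter_D_add, add_mul, smul_add]

lemma SS_zero {n : ℕ} {u : B} (h : (D f)^[n] u = 0) : SS f g 0 n u = u := by
  cases n with
  | zero => simp only [Function.iterate_zero, id_eq] at h; simp [SS, h]
  | succ n =>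
    unfold SS
    rw [Finset.sum_eq_single 0]
    · simp [cc_zero]
    · intro i hi hne
      obtain ⟨j, rfl⟩ := Nat.exists_eq_succ_of_ne_zero hne
      rw [cc_zero_succ, zero_smul]
    · intro habs
      exact absurd (Finset.mem_range.2 (Nat.succ_pos n)) habs

section WithInv
variable (hfg : f * g = 1) (hgf : g * f = 1)
include hfg hgf

lemma gs_fs (s : ℕ) : g ^ s * f ^ s = 1 := by
  have hc : Commute g f := hgf.trans hfg.symm
  rw [← hc.mul_pow, hgf, one_pow]

lemma fs_gs (s : ℕ) : f ^ s * g ^ s = 1 := by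
  have hc : Commute f g := hfg.trans hgf.symm
  rw [← hc.mul_pow, hfg, one_pow]

lemma SS_step {n : ℕ} {u : B} (h : (D f)^[n] u = 0) (a : ℂ) :
    f * SS f g a n u * g = SS f g (a + 1) (n + 1) u := by
  have hfgp : ∀ i : ℕ, f * g ^ (i + 1) = g ^ i := by
    intro i; rw [pow_succ', ← mul_assoc, hfg, one_mul]
  have key : ∀ i : ℕ, f * ((D f)^[i] u * g ^ i) * g
      = (D f)^[i + 1] u * g ^ (i + 1) + (D f)^[i] u * g ^ i := by
    intro i
    have hx : f * (D f)^[i] u = D f ((D f)^[i] u) + (D f)^[i] u * f := by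
      unfold D; abel
    calc f * ((D f)^[i] u * g ^ i) * g
        = (f * (D f)^[i] u) * g ^ (i + 1) := by
          rw [← mul_assoc, mul_assoc (f * (D f)^[i] u), ← pow_succ]
      _ = D f ((D f)^[i] u) * g ^ (i + 1) + (D f)^[i] u * (f * g ^ (i + 1)) := by
          rw [hx, add_mul, mul_assoc]
      _ = (D f)^[i + 1] u * g ^ (i + 1) + (D f)^[i] u * g ^ i := by
          rw [hfgp, Function.iterate_succ_apply']
  have hAn : (D f)^[n] u * g ^ n = 0 := by rw [h, zero_mul]
  calc f * SS f g a n u * g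
      = ∑ i ∈ range n, cc a i • (f * ((D f)^[i] u * g ^ i) * g) := by
        unfold SS
        rw [Finset.mul_sum, Finset.sum_mul]
        exact Finset.sum_congr rfl fun i _ => by
          rw [mul_smul_comm, smul_mul_assoc]
    _ = ∑ i ∈ range n, (cc a i • ((D f)^[i + 1] u * g ^ (i + 1))
          + cc a i • ((D f)^[i] u * g ^ i)) := by
        exact Finset.sum_congr rfl fun i _ => by rw [key, smul_add]
    _ = (∑ i ∈ range n, cc a i • ((D f)^[i + 1] u * g ^ (i + 1)))
          + ∑ i ∈ range n, cc a i • ((D f)^[i] u * g ^ i) := Finset.sum_add_distrib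
    _ = SS f g (a + 1) (n + 1) u := by
        have e2 : ∑ i ∈ range n, cc a i • ((D f)^[i] u * g ^ i)
            = (∑ i ∈ range n, cc a (i + 1) • ((D f)^[i + 1] u * g ^ (i + 1)))
              + cc a 0 • ((D f)^[0] u * g ^ 0) := by
          rw [← Finset.sum_range_succ' (fun i => cc a i • ((D f)^[i] u * g ^ i)) n,
            Finset.sum_range_succ, hAn, smul_zero, add_zero]
        rw [e2]
        unfold SS
        rw [Finset.sum_range_succ' (fun i => cc (a + 1) i • ((D f)^[i] u * g ^ i)) n]
        have e3 : ∀ i : ℕ, cc (a + 1) (i + 1) • ((D f)^[i + 1] u * g ^ (i + 1))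
            = cc a (i + 1) • ((D f)^[i + 1] u * g ^ (i + 1))
              + cc a i • ((D f)^[i + 1] u * g ^ (i + 1)) := by
          intro i; rw [cc_pascal, add_smul]
        simp only [e3, Finset.sum_add_distrib, cc_zero]
        abel

end WithInv

/-- polynomial-function extension principle -/
lemma eval_ext {B : Type*} [Ring B] [Algebra ℂ B] {ι κ : Type*} (s : Finset ι) (t : Finset κ)
    (p : ι → Polynomial ℂ) (q : κ → Polynomial ℂ) (x : ι → B) (y : κ → B)
    (h : ∀ m : ℕ, ∑ i ∈ s, (p i).eval (m : ℂ) • x i = ∑ j ∈ t, (q j).eval (m : ℂ) • y j)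
    (a : ℂ) : ∑ i ∈ s, (p i).eval a • x i = ∑ j ∈ t, (q j).eval a • y j := by
  rw [← sub_eq_zero, ← Module.forall_dual_apply_eq_zero_iff ℂ
    ((∑ i ∈ s, (p i).eval a • x i) - ∑ j ∈ t, (q j).eval a • y j)]
  intro ψ
  set P : Polynomial ℂ := (∑ i ∈ s, ψ (x i) • p i) - (∑ j ∈ t, ψ (y j) • q j) with hP
  have hev : ∀ c : ℂ, P.eval c
      = ψ (∑ i ∈ s, (p i).eval c • x i) - ψ (∑ j ∈ t, (q j).eval c • y j) := by
    intro c
    rw [hP, Polynomial.eval_sub, Polynomial.eval_finset_sum, Polynomial.eval_finset_sum,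
      map_sum, map_sum]
    congr 1 <;> exact Finset.sum_congr rfl fun i _ => by
      rw [Polynomial.eval_smul, map_smul, smul_eq_mul, smul_eq_mul, mul_comm]
  have hroots : P = 0 := by
    refine Polynomial.eq_zero_of_infinite_isRoot P ?_
    refine Set.Infinite.mono ?_ (Set.infinite_range_of_injective
      (Nat.cast_injective (R := ℂ)))
    rintro c ⟨m, rfl⟩
    simp only [Set.mem_setOf_eq, Polynomial.IsRoot, hev, h m, sub_self]
  have := hev a
  rw [hroots] at this
  rw [map_sub, ← this, Polynomial.eval_zero]

/-- the polynomial whose evaluation is `cc a i`. -/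
noncomputable def cpoly (i : ℕ) : Polynomial ℂ :=
  Polynomial.C (((Nat.factorial i : ℂ))⁻¹) *
    ∏ j ∈ Finset.range i, (Polynomial.X - Polynomial.C (j : ℂ))

lemma cpoly_eval (a : ℂ) (i : ℕ) : (cpoly i).eval a = cc a i := by
  unfold cpoly cc
  rw [Polynomial.eval_mul, Polynomial.eval_C, Polynomial.eval_prod, div_eq_inv_mul]
  congr 1
  exact Finset.prod_congr rfl fun j _ => by simp

lemma SS_as_poly (a : ℂ) (n : ℕ) (u : B) :
    SS f g a n u = ∑ i ∈ Finset.range n, (cpoly i).eval a • ((D f)^[i] u * g ^ i) := by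
  unfold SS
  exact Finset.sum_congr rfl fun i _ => by rw [cpoly_eval]

section Main

variable (hfg : f * g = 1) (hgf : g * f = 1)
variable {φ : ℂ → B → B} {N : B → ℕ}
variable (hN : ∀ u : B, (D f)^[N u] u = 0)
variable (hφS : ∀ (a : ℂ) (u : B) (n : ℕ), (D f)^[n] u = 0 → φ a u = SS f g a n u)
include hN hφS

lemma phi_eq (a : ℂ) (u : B) : φ a u = SS f g a (N u) u := hφS a u (N u) (hN u)

lemma phi_zero (u : B) : φ 0 u = u := by
  rw [phi_eq hN hφS, SS_zero (hN u)]

include hfg hgf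

lemma phi_step (c : ℂ) (u : B) : φ (c + 1) u = f * φ c u * g := by
  rw [hφS (c + 1) u (N u + 1) (iter_D_zero_mono (hN u) (Nat.le_succ _)),
    phi_eq hN hφS c u, SS_step hfg hgf (hN u)]

lemma phi_nat_shift (s : ℕ) (b : ℂ) (u : B) :
    φ ((s : ℂ) + b) u = f ^ s * φ b u * g ^ s := by
  induction s with
  | zero => simp
  | succ s ih =>
    have hc : ((s + 1 : ℕ) : ℂ) + b = ((s : ℂ) + b) + 1 := by push_cast; ring
    rw [hc, phi_step hfg hgf hN hφS, ih, pow_succ' f, pow_succ g]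
    simp only [mul_assoc]

lemma phi_nat (s : ℕ) (u : B) : φ (s : ℂ) u = f ^ s * u * g ^ s := by
  have := phi_nat_shift hfg hgf hN hφS s 0 u
  rw [add_zero, phi_zero hN hφS] at this
  exact this

lemma phi_neg (s : ℕ) (u : B) : φ (-(s : ℂ)) u = g ^ s * u * f ^ s := by
  have h1 := phi_nat_shift hfg hgf hN hφS s (-(s : ℂ)) u
  rw [add_neg_cancel, phi_zero hN hφS] at h1
  have h2 : g ^ s * u * f ^ s
      = g ^ s * (f ^ s * φ (-(s : ℂ)) u * g ^ s) * f ^ s := by rw [← h1]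
  symm
  rw [h2]
  calc g ^ s * (f ^ s * φ (-(s : ℂ)) u * g ^ s) * f ^ s
      = (g ^ s * f ^ s) * (φ (-(s : ℂ)) u * ((g ^ s * f ^ s))) := by
        simp only [mul_assoc]
    _ = φ (-(s : ℂ)) u := by rw [gs_fs hfg hgf, mul_one, one_mul]

lemma phi_group (a b : ℂ) (u : B) : φ a (φ b u) = φ (a + b) u := by
  set w := φ b u with hw
  have key : SS f g a (N w) w = SS f g (a + b) (N u) u := by
    have hL : ∀ c : ℂ, SS f g c (N w) w
        = ∑ i ∈ Finset.range (N w), (cpoly i).eval c • ((D f)^[i] w * g ^ i) :=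
      fun c => SS_as_poly c _ _
    have hR : ∀ c : ℂ, SS f g (c + b) (N u) u
        = ∑ i ∈ Finset.range (N u),
            ((cpoly i).comp (Polynomial.X + Polynomial.C b)).eval c
              • ((D f)^[i] u * g ^ i) := by
      intro c
      rw [SS_as_poly]
      exact Finset.sum_congr rfl fun i _ => by
        rw [Polynomial.eval_comp, Polynomial.eval_add, Polynomial.eval_X, Polynomial.eval_C]
    rw [hL, show SS f g (a + b) (N u) u = _ from hR a]
    refine eval_ext _ _ _ _ _ _ ?_ a
    intro m
    rw [← hL, ← hR]
    calc SS f g (m : ℂ) (N w) w = φ (m : ℂ) w := (phi_eq hN hφS _ _).symm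
      _ = f ^ m * φ b u * g ^ m := by rw [phi_nat hfg hgf hN hφS]
      _ = φ ((m : ℂ) + b) u := (phi_nat_shift hfg hgf hN hφS m b u).symm
      _ = SS f g ((m : ℂ) + b) (N u) u := phi_eq hN hφS _ _
  rw [phi_eq hN hφS a w, key, ← hφS (a + b) u (N u) (hN u)]

lemma phi_mul (a : ℂ) (u v : B) : φ a (u * v) = φ a u * φ a v := by
  set n := max (max (N u) (N v)) (N (u * v)) with hn
  have hnu : (D f)^[n] u = 0 :=
    iter_D_zero_mono (hN u) (le_trans (le_max_left _ _) (le_max_left _ _))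
  have hnv : (D f)^[n] v = 0 :=
    iter_D_zero_mono (hN v) (le_trans (le_max_right _ _) (le_max_left _ _))
  have hnuv : (D f)^[n] (u * v) = 0 := iter_D_zero_mono (hN (u * v)) (le_max_right _ _)
  have hG : ∀ c : ℂ, SS f g c n u * SS f g c n v
      = ∑ ij ∈ Finset.range n ×ˢ Finset.range n,
          (cpoly ij.1 * cpoly ij.2).eval c
            • (((D f)^[ij.1] u * g ^ ij.1) * ((D f)^[ij.2] v * g ^ ij.2)) := by
    intro c
    rw [SS_as_poly, SS_as_poly, Finset.sum_mul_sum, Finset.sum_product]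
    refine Finset.sum_congr rfl fun i _ => Finset.sum_congr rfl fun j _ => ?_
    rw [smul_mul_smul_comm, Polynomial.eval_mul]
  have key : SS f g a n (u * v) = SS f g a n u * SS f g a n v := by
    rw [SS_as_poly, hG]
    refine eval_ext _ _ _ _ _ _ ?_ a
    intro m
    rw [← SS_as_poly, ← hG]
    calc SS f g (m : ℂ) n (u * v) = φ (m : ℂ) (u * v) := (hφS _ _ _ hnuv).symm
      _ = f ^ m * (u * v) * g ^ m := phi_nat hfg hgf hN hφS m (u * v)
      _ = (f ^ m * u * g ^ m) * (f ^ m * v * g ^ m) := by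
          have h1 : g ^ m * f ^ m = 1 := gs_fs hfg hgf m
          calc f ^ m * (u * v) * g ^ m
              = f ^ m * (u * ((g ^ m * f ^ m) * (v * g ^ m))) := by
                rw [h1, one_mul]; simp only [mul_assoc]
            _ = (f ^ m * u * g ^ m) * (f ^ m * v * g ^ m) := by
                simp only [mul_assoc]
      _ = φ (m : ℂ) u * φ (m : ℂ) v := by
          rw [phi_nat hfg hgf hN hφS, phi_nat hfg hgf hN hφS]
      _ = SS f g (m : ℂ) n u * SS f g (m : ℂ) n v := by
          rw [hφS _ _ _ hnu, hφS _ _ _ hnv]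
  rw [hφS a (u * v) n hnuv, key, ← hφS a u n hnu, ← hφS a v n hnv]

end Main

end Stmt5Aux

/-- the maps `φ_a(u) = ∑ C(a,i) (ad f)^i(u) f^{-i}` on `U(g)[f⁻¹]`
form a one-parameter group of algebra automorphisms, with `φ_s(u) = f^s u f^{-s}`
for integer `s`. -/
theorem stmt_5 (B : Type*) [Ring B] [Algebra ℂ B] (f g : B)
    (hfg : f * g = 1) (hgf : g * f = 1)
    (hnil : ∀ u : B, ∃ n : ℕ, (fun x => f * x - x * f)^[n] u = 0)
    (φ : ℂ → B → B)
    (hφ : ∀ (a : ℂ) (u : B) (n : ℕ), (fun x => f * x - x * f)^[n] u = 0 →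
      φ a u = ∑ i ∈ Finset.range n,
        ((∏ j ∈ Finset.range i, (a - (j : ℂ))) / (Nat.factorial i : ℂ)) •
          ((fun x => f * x - x * f)^[i] u * g ^ i)) :
    (∀ a : ℂ, Function.Bijective (φ a) ∧ φ a 1 = 1 ∧
      (∀ u v : B, φ a (u + v) = φ a u + φ a v) ∧
      (∀ u v : B, φ a (u * v) = φ a u * φ a v)) ∧
    (∀ (a b : ℂ) (u : B), φ a (φ b u) = φ (a + b) u) ∧
    (∀ (s : ℕ) (u : B),
      φ (s : ℂ) u = f ^ s * u * g ^ s ∧ φ (-(s : ℂ)) u = g ^ s * u * f ^ s) := by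
  classical
  have hnil' : ∀ u : B, ∃ n : ℕ, (Stmt5Aux.D f)^[n] u = 0 := hnil
  choose N hN using hnil'
  have hφS : ∀ (a : ℂ) (u : B) (n : ℕ), (Stmt5Aux.D f)^[n] u = 0 →
      φ a u = Stmt5Aux.SS f g a n u := fun a u n h => hφ a u n h
  have hgroup : ∀ (a b : ℂ) (u : B), φ a (φ b u) = φ (a + b) u :=
    fun a b u => Stmt5Aux.phi_group hfg hgf hN hφS a b u
  have hzero : ∀ u : B, φ 0 u = u := fun u => Stmt5Aux.phi_zero hN hφS u
  refine ⟨fun a => ⟨?_, ?_, ?_, ?_⟩, hgroup, fun s u => ⟨?_, ?_⟩⟩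
  · refine Function.bijective_iff_has_inverse.2 ⟨φ (-a), fun u => ?_, fun u => ?_⟩
    · rw [hgroup, neg_add_cancel, hzero]
    · rw [hgroup, add_neg_cancel, hzero]
  · have h1 : (Stmt5Aux.D f)^[1] (1 : B) = 0 := by
      simp [Stmt5Aux.D]
    rw [hφS a 1 1 h1]
    simp [Stmt5Aux.SS, Stmt5Aux.cc]
  · intro u v
    have hn : (Stmt5Aux.D f)^[max (N u) (N v)] (u + v) = 0 := by
      rw [Stmt5Aux.iter_D_add,
        Stmt5Aux.iter_D_zero_mono (hN u) (le_max_left _ _),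
        Stmt5Aux.iter_D_zero_mono (hN v) (le_max_right _ _), add_zero]
    rw [hφS a (u + v) _ hn, Stmt5Aux.SS_add,
      ← hφS a u _ (Stmt5Aux.iter_D_zero_mono (hN u) (le_max_left _ _)),
      ← hφS a v _ (Stmt5Aux.iter_D_zero_mono (hN v) (le_max_right _ _))]
  · intro u v
    exact Stmt5Aux.phi_mul hfg hgf hN hφS a u v
  · exact Stmt5Aux.phi_nat hfg hgf hN hφS s u
  · exact Stmt5Aux.phi_neg hfg hgf hN hφS s u
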